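/- A quadruple (ȳ₁,ȳ₂,z̄,x̄) ∈ ℝ⁴ with z̄ ≥ 0 is a saddle point of the Lagrangian, i.e. L(ȳ₁,ȳ₂,z̄;x) ≤ L(ȳ₁,ȳ₂,z̄;x̄) ≤ L(y₁,y₂,z;x̄) for all x ∈ ℝ, all (y₁,y₂) ∈ ℝ² and all z ≥ 0, if and only if ȳ₁ ≥ −ln 2, ȳ₂ = 2, z̄ = 0 and x̄ = −4. -/
import Mathlib


/-- The Lagrangian of the concrete problem:
`L(y₁, y₂, z; x) = max(e^{-y₁} + y₂, y₂²) + x (y₂ - z - 2)`. -/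
noncomputable def Lcon (y₁ y₂ z x : ℝ) : ℝ :=
  max (Real.exp (-y₁) + y₂) (y₂ ^ 2) + x * (y₂ - z - 2)

/-- **Saddle points of the Lagrangian.**  A quadruple `(ȳ₁, ȳ₂, z̄, x̄)` with `z̄ ≥ 0` is a
saddle point of the Lagrangian (maximizing in `x`, minimizing in `(y₁, y₂, z)` with
`z ≥ 0`) if and only if `ȳ₁ ≥ -ln 2`, `ȳ₂ = 2`, `z̄ = 0` and `x̄ = -4`. -/
theorem stmt_9 (yb1 yb2 zb xb : ℝ) (hzb : 0 ≤ zb) :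
    ((∀ x : ℝ, Lcon yb1 yb2 zb x ≤ Lcon yb1 yb2 zb xb) ∧
      (∀ y₁ y₂ z : ℝ, 0 ≤ z → Lcon yb1 yb2 zb xb ≤ Lcon y₁ y₂ z xb)) ↔
    (-Real.log 2 ≤ yb1 ∧ yb2 = 2 ∧ zb = 0 ∧ xb = -4) := by
  simp only [Lcon]
  constructor
  · rintro ⟨h1, h2⟩
    -- Step 1: feasibility yb2 - zb - 2 = 0
    have key : yb2 - zb - 2 = 0 := by
      have hx := h1 (xb + (yb2 - zb - 2))
      nlinarith [hx]
    have hy2ge : (2:ℝ) ≤ yb2 := by linarith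
    -- Step 2: value at test point (0, 2, 0)
    have hM4 : max (Real.exp (-yb1) + yb2) (yb2 ^ 2) ≤ 4 := by
      have h := h2 0 2 0 le_rfl
      have he : Real.exp (-(0:ℝ)) = 1 := by simp [Real.exp_zero]
      rw [he] at h
      have hmax : max ((1:ℝ) + 2) ((2:ℝ) ^ 2) = 4 := by norm_num
      rw [hmax, key] at h
      simp only [mul_zero, add_zero] at h
      linarith [h]
    have hsq : yb2 ^ 2 ≤ 4 := le_trans (le_max_right _ _) hM4
    have hy2 : yb2 = 2 := by nlinarith
    have hzb0 : zb = 0 := by linarith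
    have hexp : Real.exp (-yb1) ≤ 2 := by
      have := le_trans (le_max_left _ _) hM4
      linarith [this, hy2 ▸ this]
    have hy1 : -Real.log 2 ≤ yb1 := by
      have h2' : Real.exp (-yb1) ≤ Real.exp (Real.log 2) := by
        rw [Real.exp_log (by norm_num : (0:ℝ) < 2)]; exact hexp
      have := Real.exp_le_exp.mp h2'
      linarith
    -- Step 3: xb = -4
    have hMge : (4:ℝ) ≤ max (Real.exp (-yb1) + yb2) (yb2 ^ 2) := by
      have := le_max_right (Real.exp (-yb1) + yb2) (yb2 ^ 2)
      nlinarith [this]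
    have lem : ∀ t : ℝ, -0.3 ≤ t → t ≤ 0.3 → 0 ≤ t * (4 + xb + t) := by
      intro t ht1 ht2
      have h := h2 0 (2 + t) 0 le_rfl
      have he : Real.exp (-(0:ℝ)) = 1 := by simp [Real.exp_zero]
      rw [he] at h
      have hmax : max ((1:ℝ) + (2 + t)) ((2 + t) ^ 2) = (2 + t) ^ 2 := by
        apply max_eq_right
        nlinarith [sq_nonneg (t + 0.3)]
      rw [hmax] at h
      rw [key] at h
      nlinarith [h, hMge]
    have hxb : xb = -4 := by
      by_contra hne
      have ha : xb + 4 ≠ 0 := fun h => hne (by linarith)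
      rcases lt_or_gt_of_ne ha with hlt | hgt
      · -- xb + 4 < 0
        rcases le_or_gt (-(xb + 4)) 0.6 with hsm | hbg
        · have := lem (-(xb + 4) / 2) (by linarith) (by linarith)
          nlinarith
        · have := lem 0.1 (by norm_num) (by norm_num)
          nlinarith
      · -- xb + 4 > 0
        rcases le_or_gt (xb + 4) 0.6 with hsm | hbg
        · have := lem (-((xb + 4) / 2)) (by linarith) (by linarith)
          nlinarith
        · have := lem (-0.1) (by norm_num) (by norm_num)
          nlinarith
    exact ⟨hy1, hy2, hzb0, hxb⟩
  · rintro ⟨hy1, hy2, hz, hx⟩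
    subst hy2; subst hz; subst hx
    have hexp : Real.exp (-yb1) ≤ 2 := by
      have : -yb1 ≤ Real.log 2 := by linarith
      calc Real.exp (-yb1) ≤ Real.exp (Real.log 2) := Real.exp_le_exp.mpr this
        _ = 2 := Real.exp_log (by norm_num)
    have hmax : max (Real.exp (-yb1) + 2) ((2:ℝ) ^ 2) = 4 := by
      rw [show ((2:ℝ) ^ 2) = 4 by norm_num]
      exact max_eq_right (by linarith)
    constructor
    · intro x; rw [hmax]; norm_num
    · intro y₁ y₂ z hz'
      rw [hmax]
      have := le_max_right (Real.exp (-y₁) + y₂) (y₂ ^ 2)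
      nlinarith [this, sq_nonneg (y₂ - 2)]
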